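/- arXiv:2603.13863 — 2 statements merged into one kernel-verified Lean document; each statement's English description precedes it below -/
import Mathlib

section
/- Let d = xy and let ω_x = e^{2πi/x}, ω_y = e^{2πi/y}, ω_d = e^{2πi/d}. For m ∈ Z_y and s ∈ Z_x, the vector (1/√x) ∑_{k=0}^{x-1} ω_x^{sk} |a_{ky+m}⟩ equals (1/√y) ω_d^{-ms} ∑_{l=0}^{y-1} ω_y^{-ml} |b_{lx+s}⟩, where the two bases are related by the discrete Fourier transform ⟨a_i|b_j⟩ = ω_d^{ij}/√d. -/
open Finset Complex
open scoped ComplexOrder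

/-- ω_n = e^{2πi/n} -/
noncomputable def ww (n : ℕ) : ℂ := Complex.exp (2 * Real.pi * Complex.I / n)

/-- |ψ_{m,s}⟩ = (1/√x) ∑_{k<x} ω_x^{sk} |a_{ky+m}⟩ in ℂ^d (standard basis coords). -/
noncomputable def psi (d x y m s : ℕ) : Fin d → ℂ :=
  fun t => (1 / Real.sqrt x) *
    ∑ k ∈ Finset.range x, ww x ^ (s * k) * (if (t : ℕ) = k * y + m then 1 else 0)

/-- Fourier basis vector |b_j⟩, coordinates in the standard basis. -/
noncomputable def bvec (d j : ℕ) : Fin d → ℂ :=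
  fun i => ww d ^ ((i : ℕ) * j) / Real.sqrt d

/-- rank one projection |v⟩⟨v| as a matrix. -/
noncomputable def proj {d : ℕ} (v : Fin d → ℂ) : Matrix (Fin d) (Fin d) ℂ :=
  fun i j => v i * (starRingEnd ℂ) (v j)

/-- KD quasiprobability Q_{ij}(ρ) = ⟨a_i|ρ|b_j⟩⟨b_j|a_i⟩ (standard/Fourier bases). -/
noncomputable def KD {d : ℕ} (ρ : Matrix (Fin d) (Fin d) ℂ) (i j : Fin d) : ℂ :=
  (∑ l, ρ i l * bvec d (j : ℕ) l) * (starRingEnd ℂ) (bvec d (j : ℕ) i)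

/-- The set of KD-classical pure-state projections for the DFT pair in dimension d. -/
def pureKD (d : ℕ) : Set (Matrix (Fin d) (Fin d) ℂ) :=
  {M | ∃ x y m s : ℕ, x * y = d ∧ m < y ∧ s < x ∧ M = proj (psi d x y m s)}

/-- the two expressions for the KD-classical pure state |ψ_{ms}⟩ agree:
    (1/√x)∑_k ω_x^{sk}|a_{ky+m}⟩ = (1/√y) ω_d^{-ms} ∑_l ω_y^{-ml} |b_{lx+s}⟩. -/
theorem psi_two_expressions (d x y m s : ℕ) (hx : 0 < x) (hy : 0 < y)
    (hd : d = x * y) (hm : m < y) (hs : s < x) (t : Fin d) :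
    (1 / Real.sqrt x) *
      ∑ k ∈ Finset.range x, ww x ^ (s * k) * (if (t : ℕ) = k * y + m then 1 else 0)
    = (1 / Real.sqrt y) * (ww d ^ (m * s))⁻¹ *
      ∑ l ∈ Finset.range y, (ww y ^ (m * l))⁻¹ * bvec d (l * x + s) t := by
  subst hd
  have hxC : (x:ℂ) ≠ 0 := Nat.cast_ne_zero.2 hx.ne'
  have hyC : (y:ℂ) ≠ 0 := Nat.cast_ne_zero.2 hy.ne'
  have hprimy : IsPrimitiveRoot (ww y) y := Complex.isPrimitiveRoot_exp y hy.ne'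
  have hwyy : ww y ^ y = 1 := hprimy.pow_eq_one
  have hwy0 : ww y ≠ 0 := Complex.exp_ne_zero _
  have hwd0 : ww (x*y) ≠ 0 := Complex.exp_ne_zero _
  have hwdx : ww (x*y) ^ x = ww y := by
    rw [ww, ← Complex.exp_nat_mul, ww]
    congr 1
    push_cast
    field_simp
  have hwdy : ww (x*y) ^ y = ww x := by
    rw [ww, ← Complex.exp_nat_mul, ww]
    congr 1
    push_cast
    field_simp
  set ζ : ℂ := ww y ^ (t:ℕ) * (ww y ^ m)⁻¹ with hζdef
  have key : ∀ l, (ww y ^ (m*l))⁻¹ * bvec (x*y) (l*x+s) t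
      = (ww (x*y) ^ ((t:ℕ)*s) / ((Real.sqrt ((x*y : ℕ)) : ℝ) : ℂ)) * ζ ^ l := by
    intro l
    simp only [bvec]
    have h1 : ww (x*y) ^ ((t:ℕ) * (l*x+s))
        = ww y ^ ((t:ℕ)*l) * ww (x*y) ^ ((t:ℕ)*s) := by
      rw [Nat.mul_add, pow_add, show (t:ℕ)*(l*x) = x*((t:ℕ)*l) by ring, pow_mul, hwdx]
    rw [h1, hζdef, mul_pow, inv_pow, ← pow_mul, ← pow_mul]
    ring
  rw [Finset.sum_congr rfl (fun l _ => key l), ← Finset.mul_sum]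
  have hsqxy : ((Real.sqrt ((x*y : ℕ)) : ℝ) : ℂ)
      = ((Real.sqrt x : ℝ) : ℂ) * ((Real.sqrt y : ℝ) : ℂ) := by
    push_cast
    rw [← Complex.ofReal_mul, ← Real.sqrt_mul (by positivity)]
  have hsx0 : ((Real.sqrt x : ℝ) : ℂ) ≠ 0 :=
    Complex.ofReal_ne_zero.2 (Real.sqrt_ne_zero'.2 (Nat.cast_pos.mpr hx))
  have hsy0 : ((Real.sqrt y : ℝ) : ℂ) ≠ 0 :=
    Complex.ofReal_ne_zero.2 (Real.sqrt_ne_zero'.2 (Nat.cast_pos.mpr hy))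
  have hsy2 : ((Real.sqrt y : ℝ) : ℂ) * ((Real.sqrt y : ℝ) : ℂ) = (y:ℂ) := by
    rw [← Complex.ofReal_mul, Real.mul_self_sqrt (by positivity)]
    norm_cast
  by_cases h : (t:ℕ) % y = m
  · -- t = k*y + m
    set k := (t:ℕ) / y with hk
    have htk : (t:ℕ) = k*y + m := by
      rw [hk, ← h]
      exact (Nat.div_add_mod' _ _).symm
    have hkx : k < x := by
      rw [hk, Nat.div_lt_iff_lt_mul hy]
      exact t.isLt
    have hLHS : ∑ k' ∈ Finset.range x, ww x ^ (s * k') *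
        (if (t : ℕ) = k' * y + m then 1 else 0) = ww x ^ (s * k) := by
      rw [Finset.sum_eq_single k]
      · simp [htk]
      · intro k' _ hne
        have : (t:ℕ) ≠ k' * y + m := by
          rw [htk]
          intro hEq
          exact hne (Nat.eq_of_mul_eq_mul_right hy (by omega)).symm
        simp [this]
      · intro hk'; exact absurd (Finset.mem_range.2 hkx) hk'
    have hζ1 : ζ = 1 := by
      rw [hζdef, htk, pow_add, mul_comm k y, pow_mul, hwyy, one_pow, one_mul,
        mul_inv_cancel₀ (pow_ne_zero _ hwy0)]
    have hgeom : ∑ l ∈ Finset.range y, ζ ^ l = (y:ℂ) := by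
      simp [hζ1]
    have hts : ww (x*y) ^ ((t:ℕ)*s) = ww x ^ (k*s) * ww (x*y) ^ (m*s) := by
      rw [htk, Nat.add_mul, pow_add, show k*y*s = y*(k*s) by ring, pow_mul, hwdy]
    rw [hLHS, hgeom, hts]
    have hms0 : ww (x*y) ^ (m*s) ≠ 0 := pow_ne_zero _ hwd0
    rw [hsqxy, ← hsy2, show s * k = k * s by ring]
    field_simp
  · -- no k matches; geometric sum vanishes
    have hLHS : ∑ k' ∈ Finset.range x, ww x ^ (s * k') *
        (if (t : ℕ) = k' * y + m then 1 else 0) = 0 := by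
      apply Finset.sum_eq_zero
      intro k' _
      have hne : (t:ℕ) ≠ k' * y + m := by
        intro hEq
        apply h
        rw [hEq, mul_comm, Nat.mul_add_mod]
        exact Nat.mod_eq_of_lt hm
      simp [hne]
    have hζne : ζ ≠ 1 := by
      intro hEq
      have hz : ww y ^ (((t:ℕ):ℤ) - (m:ℤ)) = 1 := by
        rw [zpow_sub₀ hwy0, zpow_natCast, zpow_natCast]
        simpa [div_eq_mul_inv] using hEq
      have hdvd := (hprimy.zpow_eq_one_iff_dvd _).mp hz
      have hmt : m ≡ (t:ℕ) [MOD y] := (Nat.modEq_iff_dvd).mpr (by exact_mod_cast hdvd)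
      exact h (by simpa [Nat.ModEq, Nat.mod_eq_of_lt hm] using hmt.symm)
    have hζy : ζ ^ y = 1 := by
      rw [hζdef, mul_pow, inv_pow, ← pow_mul, ← pow_mul, mul_comm (t:ℕ) y,
        mul_comm m y, pow_mul, pow_mul, hwyy, one_pow, one_pow, inv_one, mul_one]
    have hgeom : ∑ l ∈ Finset.range y, ζ ^ l = 0 := by
      rw [geom_sum_eq hζne, hζy]
      simp
    rw [hLHS, hgeom]
    ring
end

section
/- Let d = xy and let |ψ_{ms}⟩ = (1/√x) ∑_{k=0}^{x-1} ω_x^{sk} |a_{ky+m}⟩ for m ∈ Z_y, s ∈ Z_x, where {|a_i⟩} is the standard basis of ℂ^d and |b_j⟩ = (1/√d)∑_i ω_d^{ij}|a_i⟩. Then each |ψ_{ms}⟩ is a unit vector whose Kirkwood-Dirac distribution Q_{ij} = ⟨a_i|ψ_{ms}⟩⟨ψ_{ms}|b_j⟩⟨b_j|a_i⟩ is nonnegative for all i, j; i.e., |ψ_{ms}⟩ is a KD-classical pure state. -/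
open Finset Complex
open scoped ComplexOrder

lemma ww_ne_zero (n : ℕ) : ww n ≠ 0 := Complex.exp_ne_zero _

lemma star_ww (n : ℕ) : (starRingEnd ℂ) (ww n) = (ww n)⁻¹ := by
  rw [ww, ← Complex.exp_conj, ← Complex.exp_neg]
  congr 1
  simp [map_div₀, Complex.conj_I, Complex.conj_ofNat]
  ring

lemma ww_pow_self (n : ℕ) (hn : 0 < n) : ww n ^ n = 1 := by
  rw [ww, ← Complex.exp_nat_mul]
  rw [show (n:ℂ) * (2 * Real.pi * Complex.I / n) = 2 * Real.pi * Complex.I by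
    field_simp]
  exact Complex.exp_two_pi_mul_I

lemma ww_pow_y (d x y : ℕ) (hd : d = x * y) (hx : 0 < x) (hy : 0 < y) :
    ww d ^ y = ww x := by
  rw [ww, ww, ← Complex.exp_nat_mul]
  congr 1
  subst hd
  have hx' : (x:ℂ) ≠ 0 := Nat.cast_ne_zero.2 hx.ne'
  have hy' : (y:ℂ) ≠ 0 := Nat.cast_ne_zero.2 hy.ne'
  push_cast
  field_simp

lemma geom (x : ℕ) (hx : 0 < x) (c : ℂ) (h : c ^ x = 1) :
    ∑ k ∈ Finset.range x, c ^ k = if c = 1 then (x:ℂ) else 0 := by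
  split_ifs with hc
  · simp [hc]
  · rw [geom_sum_eq hc, h]; simp

lemma fin_sum_delta (d n : ℕ) (hn : n < d) (g : Fin d → ℂ) :
    ∑ l : Fin d, (if (l:ℕ) = n then g l else 0) = g ⟨n, hn⟩ := by
  rw [Fintype.sum_eq_single (⟨n, hn⟩ : Fin d)]
  · simp
  · intro l hl
    rw [if_neg]
    intro h
    exact hl (Fin.ext h)

lemma hlt (d x y m : ℕ) (hd : d = x * y) (hm : m < y) :
    ∀ k, k < x → k * y + m < d := by
  intro k hk
  calc k * y + m < k * y + y := by omega
  _ = (k + 1) * y := by ring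
  _ ≤ x * y := Nat.mul_le_mul_right y hk
  _ = d := hd.symm

lemma psi_eq (d x y m s : ℕ) (hy : 0 < y) (t : Fin d) (k : ℕ) (hk : k < x)
    (ht : (t:ℕ) = k * y + m) :
    psi d x y m s t = 1 / (Real.sqrt x : ℂ) * ww x ^ (s * k) := by
  unfold psi
  congr 1
  rw [Finset.sum_eq_single_of_mem k (Finset.mem_range.2 hk)]
  · simp [ht]
  · intro k' _ hkk
    rw [if_neg, mul_zero]
    rw [ht]
    intro h
    exact hkk (Nat.eq_of_mul_eq_mul_right hy (by omega)).symm

lemma psi_zero (d x y m s : ℕ) (t : Fin d) (h : ¬ ∃ k, k < x ∧ (t:ℕ) = k * y + m) :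
    psi d x y m s t = 0 := by
  unfold psi
  rw [Finset.sum_eq_zero, mul_zero]
  intro k hk
  rw [if_neg, mul_zero]
  exact fun hh => h ⟨k, Finset.mem_range.1 hk, hh⟩

lemma kd_inner_sum (d x y m s j : ℕ) (hd : d = x * y) (hm : m < y) :
    ∑ l : Fin d, (starRingEnd ℂ) (psi d x y m s l) * bvec d j l
      = 1 / (Real.sqrt x : ℂ) *
          ∑ k ∈ Finset.range x,
            ((ww x)⁻¹) ^ (s * k) * (ww d ^ ((k * y + m) * j) / Real.sqrt d) := by
  unfold psi bvec
  have step : ∀ l : Fin d,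
      (starRingEnd ℂ) (1 / (Real.sqrt x : ℂ) *
        ∑ k ∈ Finset.range x, ww x ^ (s * k) * (if (l:ℕ) = k * y + m then 1 else 0)) *
        (ww d ^ ((l:ℕ) * j) / Real.sqrt d)
      = 1 / (Real.sqrt x : ℂ) *
        ∑ k ∈ Finset.range x,
          (if (l:ℕ) = k * y + m then
            ((ww x)⁻¹) ^ (s * k) * (ww d ^ ((l:ℕ) * j) / Real.sqrt d) else 0) := by
    intro l
    rw [map_mul, map_sum]
    have h1 : (starRingEnd ℂ) (1 / (Real.sqrt x : ℂ)) = 1 / (Real.sqrt x : ℂ) := by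
      rw [map_div₀, map_one, Complex.conj_ofReal]
    rw [h1, mul_assoc, Finset.sum_mul]
    congr 1
    apply Finset.sum_congr rfl
    intro k _
    rw [map_mul, map_pow, star_ww]
    split_ifs with h <;> simp
  rw [Finset.sum_congr rfl (fun l _ => step l), ← Finset.mul_sum]
  congr 1
  rw [Finset.sum_comm]
  apply Finset.sum_congr rfl
  intro k hk
  rw [fin_sum_delta d (k * y + m) (hlt d x y m hd hm k (Finset.mem_range.1 hk))
      (fun l => ((ww x)⁻¹) ^ (s * k) * (ww d ^ ((l:ℕ) * j) / Real.sqrt d))]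

lemma kd_psi_pair (d x y m s : ℕ) (hd : d = x * y) (hm : m < y) (g : Fin d → ℂ) :
    ∑ t : Fin d, psi d x y m s t * g t
      = 1 / (Real.sqrt x : ℂ) * ∑ k ∈ Finset.range x,
          ww x ^ (s * k) * (if h : k * y + m < d then g ⟨k * y + m, h⟩ else 0) := by
  unfold psi
  have step : ∀ t : Fin d,
      (1 / (Real.sqrt x : ℂ) *
        ∑ k ∈ Finset.range x, ww x ^ (s * k) * (if (t:ℕ) = k * y + m then 1 else 0)) * g t
      = 1 / (Real.sqrt x : ℂ) *
        ∑ k ∈ Finset.range x, (if (t:ℕ) = k * y + m then ww x ^ (s * k) * g t else 0) := by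
    intro t
    rw [mul_assoc, Finset.sum_mul]
    congr 1
    apply Finset.sum_congr rfl
    intro k _
    split_ifs <;> simp
  rw [Finset.sum_congr rfl (fun t _ => step t), ← Finset.mul_sum]
  congr 1
  rw [Finset.sum_comm]
  apply Finset.sum_congr rfl
  intro k hk
  have h : k * y + m < d := hlt d x y m hd hm k (Finset.mem_range.1 hk)
  rw [fin_sum_delta d (k * y + m) h (fun t => ww x ^ (s * k) * g t), dif_pos h]


/-- |ψ_{ms}⟩ is a unit vector and its KD distribution
    Q_{ij} = ⟨a_i|ψ⟩⟨ψ|b_j⟩⟨b_j|a_i⟩ is nonnegative (real ≥ 0) for all i, j. -/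
theorem psi_unit_and_KD_classical (d x y m s : ℕ) (hd : d = x * y)
    (hx : 0 < x) (hy : 0 < y) (hm : m < y) (hs : s < x) :
    (∑ t, Complex.normSq (psi d x y m s t)) = 1 ∧
    ∀ i j : Fin d,
      0 ≤ psi d x y m s i *
          (∑ l, (starRingEnd ℂ) (psi d x y m s l) * bvec d (j : ℕ) l) *
          (starRingEnd ℂ) (bvec d (j : ℕ) i) := by
  have hζx : ww x ^ x = 1 := ww_pow_self x hx
  have hξy : ww d ^ y = ww x := ww_pow_y d x y hd hx hy
  have hsx0 : (Real.sqrt x : ℂ) ≠ 0 :=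
    Complex.ofReal_ne_zero.2 (ne_of_gt (Real.sqrt_pos.2 (by exact_mod_cast hx)))
  have hdpos : 0 < d := hd ▸ Nat.mul_pos hx hy
  have hsd0 : (Real.sqrt d : ℂ) ≠ 0 :=
    Complex.ofReal_ne_zero.2 (ne_of_gt (Real.sqrt_pos.2 (by exact_mod_cast hdpos)))
  have hsqx : (Real.sqrt x : ℂ) * (Real.sqrt x : ℂ) = (x:ℂ) := by
    rw [← Complex.ofReal_mul, Real.mul_self_sqrt (Nat.cast_nonneg x)]
    norm_cast
  have hsqd : (Real.sqrt d : ℂ) * (Real.sqrt d : ℂ) = (d:ℂ) := by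
    rw [← Complex.ofReal_mul, Real.mul_self_sqrt (Nat.cast_nonneg d)]
    norm_cast
  constructor
  · -- unit norm
    have key : ∑ t : Fin d, psi d x y m s t * (starRingEnd ℂ) (psi d x y m s t) = 1 := by
      rw [kd_psi_pair d x y m s hd hm]
      have heach : ∀ k ∈ Finset.range x,
          ww x ^ (s * k) * (if h : k * y + m < d then
            (starRingEnd ℂ) (psi d x y m s ⟨k * y + m, h⟩) else 0)
          = 1 / (Real.sqrt x : ℂ) := by
        intro k hk
        rw [dif_pos (hlt d x y m hd hm k (Finset.mem_range.1 hk))]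
        rw [psi_eq d x y m s hy _ k (Finset.mem_range.1 hk) rfl, map_mul, map_pow, star_ww]
        rw [map_div₀, map_one, Complex.conj_ofReal, inv_pow]
        rw [show ww x ^ (s*k) * (1 / (Real.sqrt x : ℂ) * (ww x ^ (s*k))⁻¹)
            = (ww x ^ (s*k) * (ww x ^ (s*k))⁻¹) * (1 / (Real.sqrt x : ℂ)) by ring]
        rw [mul_inv_cancel₀ (pow_ne_zero _ (ww_ne_zero x)), one_mul]
      rw [Finset.sum_congr rfl heach, Finset.sum_const, Finset.card_range, nsmul_eq_mul]
      field_simp [hsqx]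
      rw [sq, hsqx]
    have key' : ((∑ t : Fin d, Complex.normSq (psi d x y m s t) : ℝ) : ℂ) = 1 := by
      push_cast
      rw [← key]
      apply Finset.sum_congr rfl
      intro t _
      rw [Complex.mul_conj]
    exact_mod_cast key'
  · intro i j
    rw [kd_inner_sum d x y m s j hd hm]
    have hb : (starRingEnd ℂ) (bvec d (j:ℕ) i)
        = ((ww d)⁻¹) ^ ((i:ℕ) * (j:ℕ)) / (Real.sqrt d : ℂ) := by
      unfold bvec
      rw [map_div₀, map_pow, star_ww, Complex.conj_ofReal]
    rw [hb]
    by_cases hEx : ∃ k, k < x ∧ (i:ℕ) = k * y + m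
    · obtain ⟨k, hk, hik⟩ := hEx
      rw [psi_eq d x y m s hy i k hk hik, hik]
      have e1 : ∀ a : ℕ, ww d ^ ((a * y + m) * (j:ℕ))
          = ww x ^ (a * (j:ℕ)) * ww d ^ (m * (j:ℕ)) := by
        intro a
        rw [show (a * y + m) * (j:ℕ) = y * (a * (j:ℕ)) + m * (j:ℕ) by ring,
          pow_add, pow_mul, hξy]
      have e2 : (ww d)⁻¹ ^ ((k * y + m) * (j:ℕ))
          = ((ww x) ^ (k * (j:ℕ)))⁻¹ * ((ww d) ^ (m * (j:ℕ)))⁻¹ := by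
        rw [inv_pow, e1 k, mul_inv]
      have key2 : 1 / (Real.sqrt x : ℂ) * ww x ^ (s * k) *
            (1 / (Real.sqrt x : ℂ) * ∑ k' ∈ Finset.range x,
              ((ww x)⁻¹) ^ (s * k') * (ww d ^ ((k' * y + m) * (j:ℕ)) / (Real.sqrt d : ℂ))) *
            (((ww d)⁻¹) ^ ((k * y + m) * (j:ℕ)) / (Real.sqrt d : ℂ))
          = 1 / ((Real.sqrt x : ℂ) * (Real.sqrt x : ℂ) * ((Real.sqrt d : ℂ) * (Real.sqrt d : ℂ)))
            * ((ww x ^ (s * k) * ((ww x) ^ (k * (j:ℕ)))⁻¹) *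
               ∑ k' ∈ Finset.range x, ((ww x)⁻¹ ^ s * ww x ^ (j:ℕ)) ^ k') := by
        rw [e2, Finset.mul_sum, Finset.mul_sum, Finset.mul_sum, Finset.sum_mul, Finset.mul_sum]
        apply Finset.sum_congr rfl
        intro k' _
        rw [e1 k']
        simp only [inv_pow, mul_pow, ← pow_mul]
        have hne1 : ww x ^ (s * k') ≠ 0 := pow_ne_zero _ (ww_ne_zero x)
        have hne2 : ww d ^ (m * (j:ℕ)) ≠ 0 := pow_ne_zero _ (ww_ne_zero d)
        have hne3 : ww x ^ (k * (j:ℕ)) ≠ 0 := pow_ne_zero _ (ww_ne_zero x)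
        have hne4 : ww x ^ (s * k') ≠ 0 := pow_ne_zero _ (ww_ne_zero x)
        field_simp
        ring
      rw [key2]
      have hcx : ((ww x)⁻¹ ^ s * ww x ^ (j:ℕ)) ^ x = 1 := by
        rw [mul_pow, ← pow_mul, ← pow_mul, mul_comm s x, mul_comm (j:ℕ) x,
          pow_mul, pow_mul, inv_pow, hζx]
        simp
      rw [geom x hx _ hcx]
      split_ifs with hc
      · have hjs : ww x ^ (s:ℕ) = ww x ^ (j:ℕ) := by
          rw [inv_pow] at hc
          exact (inv_mul_eq_one₀ (pow_ne_zero _ (ww_ne_zero x))).1 hc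
        have h8 : ww x ^ (k * (j:ℕ)) = ww x ^ (s * k) := by
          rw [mul_comm k (j:ℕ), pow_mul, ← hjs, ← pow_mul]
        have h7 : ww x ^ (s * k) * ((ww x) ^ (k * (j:ℕ)))⁻¹ = 1 := by
          rw [h8, mul_inv_cancel₀ (pow_ne_zero _ (ww_ne_zero x))]
        rw [h7, one_mul, hsqx, hsqd]
        rw [show 1 / ((x:ℂ) * (d:ℂ)) * (x:ℂ)
            = Complex.ofReal ((x:ℝ) / ((x:ℝ) * (d:ℝ))) by push_cast; ring]
        rw [Complex.zero_le_real]
        positivity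
      · simp
    · rw [psi_zero d x y m s i hEx]
      simp
end
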